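/- Let ℓ, m be positive integers with m ≤ ℓ, and let u be drawn uniformly at random from the odd residues modulo 2^ℓ. Define h(y) = ((u·y) mod 2^ℓ) / 2^(ℓ-m) (integer division). Then for any two distinct integers y, z with 0 ≤ y, z < 2^ℓ, the probability that h(y) = h(z) is at most C·2^(-m) for some absolute constant C (one may take C = 4). -/

import Mathlib

/-- The multiplicative hash: top `m` bits of `u * y mod 2^ℓ`. -/
def mulHash (ℓ m u y : ℕ) : ℕ := (u * y % 2 ^ ℓ) / 2 ^ (ℓ - m)

/-- Number of odd numbers in an aligned even interval. -/
lemma card_odd_Ico (a n : ℕ) :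
    ((Finset.Ico (2*a) (2*a+2*n)).filter (fun u => u % 2 = 1)).card = n := by
  have himg : (Finset.Ico (2*a) (2*a+2*n)).filter (fun u => u % 2 = 1)
      = (Finset.Ico a (a+n)).image (fun i => 2*i+1) := by
    ext x
    simp only [Finset.mem_filter, Finset.mem_Ico, Finset.mem_image]
    constructor
    · rintro ⟨⟨h1, h2⟩, h3⟩
      exact ⟨x / 2, by omega, by omega⟩
    · rintro ⟨i, ⟨h1, h2⟩, rfl⟩
      omega
  rw [himg, Finset.card_image_of_injective _ (fun a b h => by omega)]
  simp

/-- Pseudouniversality: for a uniformly random odd multiplier `u` modulo `2^ℓ`,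
the probability that two distinct `ℓ`-bit values hash to the same `m`-bit value
is at most `4 / 2^m`. -/
theorem mulHash_pseudouniversal (ℓ m : ℕ) (hm : 0 < m) (hml : m ≤ ℓ)
    (y z : ℕ) (hy : y < 2 ^ ℓ) (hz : z < 2 ^ ℓ) (hne : y ≠ z) :
    ((((Finset.range (2 ^ ℓ)).filter (fun u => u % 2 = 1)).filter
        (fun u => mulHash ℓ m u y = mulHash ℓ m u z)).card : ℝ) /
      (((Finset.range (2 ^ ℓ)).filter (fun u => u % 2 = 1)).card : ℝ) ≤
      4 / 2 ^ m := by
  have hℓ : 1 ≤ ℓ := le_trans hm hml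
  set N := 2 ^ ℓ with hNdef
  set K := 2 ^ (ℓ - m) with hKdef
  have hKN : K ≤ N := Nat.pow_le_pow_right (by norm_num) (by omega)
  have hKpos : 0 < K := pow_pos (by norm_num) _
  have hNpos : 0 < N := pow_pos (by norm_num) _
  -- denominator
  have hden : ((Finset.range N).filter (fun u => u % 2 = 1)).card = 2 ^ (ℓ - 1) := by
    have hNsplit : 2 * 2 ^ (ℓ - 1) = N := by
      rw [hNdef, ← pow_succ']
      congr 1
      omega
    have : Finset.range N = Finset.Ico (2*0) (2*0 + 2*2^(ℓ-1)) := by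
      rw [Finset.range_eq_Ico]
      congr 1
      omega
    rw [this, card_odd_Ico]
  -- the difference D
  set D := (y + (N - z)) % N with hDdef
  have hD0 : D ≠ 0 := by
    rcases Nat.lt_or_ge (y + (N - z)) N with h | h
    · rw [hDdef, Nat.mod_eq_of_lt h]; omega
    · rw [hDdef, Nat.mod_eq_sub_mod h, Nat.mod_eq_of_lt (by omega)]; omega
  have hDN : D < N := Nat.mod_lt _ hNpos
  have hzD : z + D ≡ y [MOD N] := by
    calc z + D ≡ z + (y + (N - z)) [MOD N] := Nat.ModEq.add_left z (Nat.mod_modEq _ N)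
    _ = y + N := by omega
    _ ≡ y [MOD N] := (Nat.add_mod_right y N : (y + N) % N = y % N)
  -- factor D = 2^s * t with t odd
  obtain ⟨s, t, ht2, hD⟩ := Nat.exists_eq_pow_mul_and_not_dvd hD0 2 (by norm_num)
  have ht1 : 1 ≤ t := Nat.pos_of_ne_zero (fun h => hD0 (by rw [hD, h, mul_zero]))
  have htodd : t % 2 = 1 := by omega
  have hsl : s < ℓ := by
    have h1 : 2 ^ s ≤ D := by
      rw [hD]; exact Nat.le_mul_of_pos_right _ ht1
    have : (2:ℕ) ^ s < 2 ^ ℓ := lt_of_le_of_lt h1 hDN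
    exact (Nat.pow_lt_pow_iff_right (by norm_num)).mp this
  set M := 2 ^ (ℓ - s) with hMdef
  have hMpos : 0 < M := pow_pos (by norm_num) _
  have hNM : N = 2 ^ s * M := by
    rw [hNdef, hMdef, ← pow_add]
    congr 1
    omega
  have h2M : 2 ∣ M := by
    rw [hMdef]
    exact dvd_pow_self 2 (by omega)
  -- set of "bad" values w
  set W : Finset ℕ := (Finset.range M).filter
    (fun w => w % 2 = 1 ∧ (2 ^ s * w < K ∨ N - K < 2 ^ s * w)) with hWdef
  set A := (((Finset.range N).filter (fun u => u % 2 = 1)).filter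
      (fun u => mulHash ℓ m u y = mulHash ℓ m u z)) with hAdef
  -- key: every colliding u maps into W
  have hmaps : ∀ u ∈ A, (u * t) % M ∈ W := by
    intro u hu
    simp only [hAdef, Finset.mem_filter, Finset.mem_range] at hu
    obtain ⟨⟨huN, huodd⟩, hcol⟩ := hu
    set a := u * y % N with ha
    set b := u * z % N with hb
    set c := u * D % N with hc
    have habK : a < b + K ∧ b < a + K := by
      have h5 : a / K = b / K := hcol
      have h1 := Nat.div_add_mod a K
      rw [h5] at h1
      have h2 := Nat.div_add_mod b K
      have h3 : a % K < K := Nat.mod_lt _ hKpos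
      have h4 : b % K < K := Nat.mod_lt _ hKpos
      omega
    have hbc : (b + c) % N = a := by
      have hmodeq : u * z + u * D ≡ u * y [MOD N] := by
        calc u * z + u * D = u * (z + D) := by ring
        _ ≡ u * y [MOD N] := hzD.mul_left u
      calc (b + c) % N = (u * z + u * D) % N := by
            rw [hb, hc]; exact (Nat.add_mod _ _ _).symm
      _ = u * y % N := hmodeq
      _ = a := rfl
    have hcN : c < N := Nat.mod_lt _ hNpos
    have hbN : b < N := Nat.mod_lt _ hNpos
    have hcond : c < K ∨ N - K < c := by
      rcases Nat.lt_or_ge (b + c) N with h | h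
      · rw [Nat.mod_eq_of_lt h] at hbc; omega
      · rw [Nat.mod_eq_sub_mod h, Nat.mod_eq_of_lt (by omega)] at hbc; omega
    have hcw : c = 2 ^ s * ((u * t) % M) := by
      rw [hc, hD, hNM, show u * (2 ^ s * t) = 2 ^ s * (u * t) by ring,
        Nat.mul_mod_mul_left]
    simp only [hWdef, Finset.mem_filter, Finset.mem_range]
    refine ⟨Nat.mod_lt _ hMpos, ?_, ?_⟩
    · rw [Nat.mod_mod_of_dvd _ h2M, Nat.mul_mod, huodd, htodd]
    · rw [← hcw]; exact hcond
  -- fibers have size at most 2^s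
  have hfiber : ∀ w ∈ W, (A.filter (fun u => (u * t) % M = w)).card ≤ 2 ^ s := by
    intro w _
    have hle := Finset.card_le_card_of_injOn (fun u => u / M)
      (s := A.filter (fun u => (u * t) % M = w)) (t := Finset.range (2 ^ s))
      ?_ ?_
    · simpa using hle
    · intro u hu
      simp only [hAdef, Finset.mem_coe, Finset.mem_filter, Finset.mem_range] at hu ⊢
      have huN : u < N := hu.1.1.1
      exact Nat.div_lt_of_lt_mul (by rw [mul_comm]; omega)
    · intro u hu u' hu' hdiv
      simp only [hAdef, Finset.coe_filter, Set.mem_setOf_eq, Finset.mem_filter,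
        Finset.mem_range] at hu hu'
      simp only at hdiv
      have hcop : Nat.gcd M t = 1 := by
        have hc : Nat.Coprime t M := by
          rw [hMdef]
          exact Nat.Coprime.pow_right _ ((Nat.prime_two.coprime_iff_not_dvd).mpr ht2).symm
        exact hc.symm
      have hmod : u % M = u' % M :=
        Nat.ModEq.cancel_right_of_coprime hcop (hu.2.trans hu'.2.symm)
      have h1 := Nat.div_add_mod u M
      rw [hdiv] at h1
      have h2 := Nat.div_add_mod u' M
      omega
  have hcardA : A.card ≤ 2 ^ s * W.card :=
    Finset.card_le_mul_card_image_of_maps_to hmaps _ hfiber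
  -- bound card of W
  have hWcard : A.card ≤ 2 ^ (ℓ - m) := by
    rcases le_or_gt (ℓ - m) s with hcase | hcase
    · -- W is empty
      have hWempty : W = ∅ := by
        rw [Finset.eq_empty_iff_forall_notMem]
        intro w hw
        simp only [hWdef, Finset.mem_filter, Finset.mem_range] at hw
        obtain ⟨hwM, hwodd, hwcond⟩ := hw
        have h1 : K ≤ 2 ^ s := Nat.pow_le_pow_right (by norm_num) hcase
        have h2 : 2 ^ s ≤ 2 ^ s * w := Nat.le_mul_of_pos_right _ (by omega)
        have h3 : 2 ^ s * w ≤ 2 ^ s * (M - 1) := Nat.mul_le_mul_left _ (by omega)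
        have h4 : 2 ^ s * (M - 1) = N - 2 ^ s := by
          rw [Nat.mul_sub, mul_one, hNM]
        omega
      rw [hWempty] at hcardA
      simp only [Finset.card_empty, mul_zero, Nat.le_zero] at hcardA
      omega
    · -- main case: s < ℓ - m
      set k := ℓ - m - s with hkdef
      have hk1 : 1 ≤ k := by omega
      have hke : 2 * 2 ^ (k - 1) = 2 ^ k := by
        rw [← pow_succ']
        congr 1
        omega
      have hKsk : K = 2 ^ s * 2 ^ k := by
        rw [hKdef, ← pow_add]
        congr 1
        omega
      have hkM : 2 ^ k ≤ M := Nat.pow_le_pow_right (by norm_num) (by omega)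
      have hMsub : 2 ^ s * (M - 2 ^ k) = N - K := by
        rw [Nat.mul_sub, hNM, hKsk]
      have hWsub : W ⊆ ((Finset.Ico 0 (2 ^ k)).filter (fun u => u % 2 = 1)) ∪
          ((Finset.Ico (M - 2 ^ k) M).filter (fun u => u % 2 = 1)) := by
        intro w hw
        simp only [hWdef, Finset.mem_filter, Finset.mem_range] at hw
        obtain ⟨hwM, hwodd, hwcond⟩ := hw
        simp only [Finset.mem_union, Finset.mem_filter, Finset.mem_Ico]
        rcases hwcond with h | h
        · left
          refine ⟨⟨Nat.zero_le _, ?_⟩, hwodd⟩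
          rw [hKsk] at h
          exact lt_of_mul_lt_mul_left h (Nat.zero_le _)
        · right
          refine ⟨⟨?_, hwM⟩, hwodd⟩
          rw [← hMsub] at h
          have := lt_of_mul_lt_mul_left h (Nat.zero_le (2 ^ s))
          omega
      have hc1 : ((Finset.Ico 0 (2 ^ k)).filter (fun u => u % 2 = 1)).card
          = 2 ^ (k - 1) := by
        have he : Finset.Ico 0 (2 ^ k) = Finset.Ico (2*0) (2*0 + 2*2^(k-1)) := by
          congr 1 <;> omega
        rw [he, card_odd_Ico]
      have hc2 : ((Finset.Ico (M - 2 ^ k) M).filter (fun u => u % 2 = 1)).card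
          = 2 ^ (k - 1) := by
        have hMe : 2 * 2 ^ (ℓ - s - 1) = M := by
          rw [hMdef, ← pow_succ']
          congr 1
          omega
        have hle : 2 ^ (k - 1) ≤ 2 ^ (ℓ - s - 1) :=
          Nat.pow_le_pow_right (by norm_num) (by omega)
        have he : Finset.Ico (M - 2 ^ k) M
            = Finset.Ico (2 * (2 ^ (ℓ - s - 1) - 2 ^ (k - 1)))
              (2 * (2 ^ (ℓ - s - 1) - 2 ^ (k - 1)) + 2 * 2 ^ (k - 1)) := by
          congr 1 <;> omega
        rw [he, card_odd_Ico]
      have hWle : W.card ≤ 2 ^ k := by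
        calc W.card ≤ (((Finset.Ico 0 (2 ^ k)).filter (fun u => u % 2 = 1)) ∪
            ((Finset.Ico (M - 2 ^ k) M).filter (fun u => u % 2 = 1))).card :=
              Finset.card_le_card hWsub
        _ ≤ ((Finset.Ico 0 (2 ^ k)).filter (fun u => u % 2 = 1)).card +
            ((Finset.Ico (M - 2 ^ k) M).filter (fun u => u % 2 = 1)).card :=
              Finset.card_union_le _ _
        _ = 2 ^ (k - 1) + 2 ^ (k - 1) := by rw [hc1, hc2]
        _ = 2 ^ k := by omega
      calc A.card ≤ 2 ^ s * W.card := hcardA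
      _ ≤ 2 ^ s * 2 ^ k := Nat.mul_le_mul_left _ hWle
      _ = 2 ^ (ℓ - m) := by
          rw [← pow_add]
          congr 1
          omega
  -- conclude
  rw [hden]
  have hnat : A.card * 2 ^ m ≤ 4 * 2 ^ (ℓ - 1) := by
    calc A.card * 2 ^ m ≤ 2 ^ (ℓ - m) * 2 ^ m := Nat.mul_le_mul_right _ hWcard
    _ = 2 ^ ℓ := by rw [← pow_add]; congr 1; omega
    _ ≤ 4 * 2 ^ (ℓ - 1) := by
        rw [show (4:ℕ) = 2 ^ 2 by norm_num, ← pow_add]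
        exact Nat.pow_le_pow_right (by norm_num) (by omega)
  rw [div_le_div_iff₀ (by positivity) (by positivity)]
  exact_mod_cast hnat
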